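/- For nonempty finite sets A₁, A₂, A₃, A₄ ⊆ 𝔽₂ⁿ, the normalized energy ω(A₁,A₂,A₃,A₄) := |{(a₁,a₂,a₃,a₄) ∈ A₁×A₂×A₃×A₄ : a₁+a₂+a₃+a₄ = 0}| / (|A₁||A₂||A₃||A₄|)^{3/4} satisfies 0 ≤ ω(A₁,A₂,A₃,A₄) ≤ 1. -/

import Mathlib

open Finset Pointwise

noncomputable def energy {n : ℕ} (A₁ A₂ A₃ A₄ : Finset (Fin n → ZMod 2)) : ℝ :=
  (((A₁ ×ˢ A₂ ×ˢ A₃ ×ˢ A₄).filter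
      (fun p => p.1 + p.2.1 + p.2.2.1 + p.2.2.2 = 0)).card : ℝ) /
    ((A₁.card : ℝ) * A₂.card * A₃.card * A₄.card) ^ ((3 : ℝ) / 4)

set_option maxHeartbeats 1000000 in
theorem energy_nonneg_le_one {n : ℕ} (A₁ A₂ A₃ A₄ : Finset (Fin n → ZMod 2))
    (h₁ : A₁.Nonempty) (h₂ : A₂.Nonempty) (h₃ : A₃.Nonempty) (h₄ : A₄.Nonempty) :
    0 ≤ energy A₁ A₂ A₃ A₄ ∧ energy A₁ A₂ A₃ A₄ ≤ 1 := by
  set S := ((A₁ ×ˢ A₂ ×ˢ A₃ ×ˢ A₄).filter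
      (fun p => p.1 + p.2.1 + p.2.2.1 + p.2.2.2 = 0)) with hS
  have hmem : ∀ p ∈ S, p.1 ∈ A₁ ∧ p.2.1 ∈ A₂ ∧ p.2.2.1 ∈ A₃ ∧ p.2.2.2 ∈ A₄ ∧
      p.1 + p.2.1 + p.2.2.1 + p.2.2.2 = 0 := by
    intro p hp
    simp only [hS, mem_filter, mem_product] at hp
    tauto
  -- four inequalities
  have e1 : S.card ≤ (A₂ ×ˢ A₃ ×ˢ A₄).card := by
    apply Finset.card_le_card_of_injOn (fun p => p.2)
    · intro p hp
      obtain ⟨_, h2, h3, h4, _⟩ := hmem p hp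
      simp [mem_product, h2, h3, h4]
    · intro p hp q hq h
      obtain ⟨_, _, _, _, hp5⟩ := hmem p hp
      obtain ⟨_, _, _, _, hq5⟩ := hmem q hq
      have : p.1 = q.1 := by
        have h1 : p.2.1 = q.2.1 := congrArg Prod.fst h
        have h2 : p.2.2.1 = q.2.2.1 := congrArg Prod.fst (congrArg Prod.snd h)
        have h3 : p.2.2.2 = q.2.2.2 := congrArg Prod.snd (congrArg Prod.snd h)
        linear_combination hp5 - hq5 - h1 - h2 - h3
      exact Prod.ext this h
  have e2 : S.card ≤ (A₁ ×ˢ A₃ ×ˢ A₄).card := by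
    apply Finset.card_le_card_of_injOn (fun p => (p.1, p.2.2))
    · intro p hp
      obtain ⟨h1, _, h3, h4, _⟩ := hmem p hp
      simp [mem_product, h1, h3, h4]
    · intro p hp q hq h
      obtain ⟨_, _, _, _, hp5⟩ := hmem p hp
      obtain ⟨_, _, _, _, hq5⟩ := hmem q hq
      simp only [Prod.mk.injEq] at h
      obtain ⟨h1, h34⟩ := h
      have h3 : p.2.2.1 = q.2.2.1 := congrArg Prod.fst h34
      have h4 : p.2.2.2 = q.2.2.2 := congrArg Prod.snd h34
      have h2 : p.2.1 = q.2.1 := by linear_combination hp5 - hq5 - h1 - h3 - h4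
      exact Prod.ext h1 (Prod.ext h2 (Prod.ext h3 h4))
  have e3 : S.card ≤ (A₁ ×ˢ A₂ ×ˢ A₄).card := by
    apply Finset.card_le_card_of_injOn (fun p => (p.1, p.2.1, p.2.2.2))
    · intro p hp
      obtain ⟨h1, h2, _, h4, _⟩ := hmem p hp
      simp [mem_product, h1, h2, h4]
    · intro p hp q hq h
      obtain ⟨_, _, _, _, hp5⟩ := hmem p hp
      obtain ⟨_, _, _, _, hq5⟩ := hmem q hq
      simp only [Prod.mk.injEq] at h
      obtain ⟨h1, h2, h4⟩ := h
      have h3 : p.2.2.1 = q.2.2.1 := by linear_combination hp5 - hq5 - h1 - h2 - h4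
      exact Prod.ext h1 (Prod.ext h2 (Prod.ext h3 h4))
  have e4 : S.card ≤ (A₁ ×ˢ A₂ ×ˢ A₃).card := by
    apply Finset.card_le_card_of_injOn (fun p => (p.1, p.2.1, p.2.2.1))
    · intro p hp
      obtain ⟨h1, h2, h3, _, _⟩ := hmem p hp
      simp [mem_product, h1, h2, h3]
    · intro p hp q hq h
      obtain ⟨_, _, _, _, hp5⟩ := hmem p hp
      obtain ⟨_, _, _, _, hq5⟩ := hmem q hq
      simp only [Prod.mk.injEq] at h
      obtain ⟨h1, h2, h3⟩ := h
      have h4 : p.2.2.2 = q.2.2.2 := by linear_combination hp5 - hq5 - h1 - h2 - h3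
      exact Prod.ext h1 (Prod.ext h2 (Prod.ext h3 h4))
  simp only [card_product] at e1 e2 e3 e4
  set P : ℝ := (A₁.card : ℝ) * A₂.card * A₃.card * A₄.card with hP
  have hPpos : 0 < P := by
    have := h₁.card_pos; have := h₂.card_pos; have := h₃.card_pos; have := h₄.card_pos
    positivity
  have hN4 : (S.card : ℝ) ^ (4 : ℕ) ≤ P ^ (3 : ℕ) := by
    have c1 : (S.card : ℝ) ≤ (A₂.card : ℝ) * A₃.card * A₄.card := by
      have := (Nat.cast_le (α := ℝ)).mpr e1
      push_cast at this
      linarith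
    have c2 : (S.card : ℝ) ≤ (A₁.card : ℝ) * A₃.card * A₄.card := by
      have := (Nat.cast_le (α := ℝ)).mpr e2
      push_cast at this
      linarith
    have c3 : (S.card : ℝ) ≤ (A₁.card : ℝ) * A₂.card * A₄.card := by
      have := (Nat.cast_le (α := ℝ)).mpr e3
      push_cast at this
      linarith
    have c4 : (S.card : ℝ) ≤ (A₁.card : ℝ) * A₂.card * A₃.card := by
      have := (Nat.cast_le (α := ℝ)).mpr e4
      push_cast at this
      linarith
    have hnn : (0:ℝ) ≤ (S.card : ℝ) := Nat.cast_nonneg _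
    calc (S.card : ℝ) ^ (4:ℕ)
        = (S.card : ℝ) * (S.card : ℝ) * (S.card : ℝ) * (S.card : ℝ) := by ring
      _ ≤ ((A₂.card : ℝ) * A₃.card * A₄.card) * ((A₁.card : ℝ) * A₃.card * A₄.card)
          * ((A₁.card : ℝ) * A₂.card * A₄.card) * ((A₁.card : ℝ) * A₂.card * A₃.card) := by
          have n1 : (0:ℝ) ≤ (A₂.card : ℝ) * A₃.card * A₄.card := by positivity
          have n2 : (0:ℝ) ≤ ((A₂.card : ℝ) * A₃.card * A₄.card) * ((A₁.card : ℝ) * A₃.card * A₄.card) := by positivity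
          exact mul_le_mul (mul_le_mul (mul_le_mul c1 c2 hnn n1) c3 hnn n2) c4 hnn (by positivity)
      _ = P ^ (3:ℕ) := by rw [hP]; ring
  have hNle : (S.card : ℝ) ≤ P ^ ((3:ℝ)/4) := by
    have h4 : (S.card : ℝ) = ((S.card : ℝ) ^ (4:ℕ)) ^ ((1:ℝ)/4) := by
      rw [← Real.rpow_natCast ((S.card : ℝ)) 4, ← Real.rpow_mul (Nat.cast_nonneg _)]
      norm_num
    rw [h4]
    have : P ^ ((3:ℝ)/4) = (P ^ (3:ℕ)) ^ ((1:ℝ)/4) := by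
      rw [← Real.rpow_natCast P 3, ← Real.rpow_mul hPpos.le]
      norm_num
    rw [this]
    exact Real.rpow_le_rpow (pow_nonneg (Nat.cast_nonneg _) _) hN4 (by norm_num)
  constructor
  · unfold energy
    positivity
  · unfold energy
    rw [div_le_one (by positivity)]
    exact hNle
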